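/- For any two response objects o1 and o2 and any configuration c, the resolve complexity of merge(o1, o2) is at most rcx(o1, c) + rcx(o2, c), where merge recursively merges fields and collapses fields with the same label into one. -/

import Mathlib

/-! Response objects, recursive merge, and resolve complexity. -/

/-- Response objects: scalar values, finite maps from labels to responses,
or finite lists of responses. -/
inductive Obj where
  | scalar : String → Obj
  | obj : List (String × Obj) → Obj
  | arr : List Obj → Obj

mutual
/-- Recursive merge of two responses: union of labels, recursively merging
values on common labels. -/
def merge : Obj → Obj → Obj
  | .obj fs, .obj fs2 => .obj (mergeFields fs fs2)
  | o, _ => o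
def mergeFields : List (String × Obj) → List (String × Obj) → List (String × Obj)
  | [], fs2 => fs2
  | (l, v) :: fs, fs2 =>
    match fs2.find? (fun p => p.1 == l) with
    | some p2 => (l, merge v p2.2) :: mergeFields fs (fs2.eraseP (fun p => p.1 == l))
    | none => (l, v) :: mergeFields fs fs2
end

mutual
/-- Resolve complexity: sum of the weight of every field occurrence. -/
def rcx (w : String → ℕ) : Obj → ℕ
  | .scalar _ => 0
  | .obj fs => rcxF w fs
  | .arr os => rcxL w os
def rcxF (w : String → ℕ) : List (String × Obj) → ℕ
  | [] => 0
  | (l, v) :: fs => w l + rcx w v + rcxF w fs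
def rcxL (w : String → ℕ) : List Obj → ℕ
  | [] => 0
  | o :: os => rcx w o + rcxL w os
end

mutual
/-- Number of field occurrences in a response. -/
def fieldCount : Obj → ℕ
  | .scalar _ => 0
  | .obj fs => fieldCountF fs
  | .arr os => fieldCountL os
def fieldCountF : List (String × Obj) → ℕ
  | [] => 0
  | (_, v) :: fs => 1 + fieldCount v + fieldCountF fs
def fieldCountL : List Obj → ℕ
  | [] => 0
  | o :: os => fieldCount o + fieldCountL os
end

/-- Top-level labels of a response object. -/
def labels : Obj → List String
  | .obj fs => fs.map Prod.fst
  | _ => []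

lemma rcxF_eraseP (w : String → ℕ) (q : String × Obj → Bool) :
    ∀ fs p, fs.find? q = some p →
      rcxF w (fs.eraseP q) + (w p.1 + rcx w p.2) = rcxF w fs := by
  intro fs
  induction fs with
  | nil => intro p h; simp [List.find?] at h
  | cons a fs ih =>
    intro p h
    by_cases hq : q a
    · rw [List.find?_cons_of_pos hq] at h
      injection h with h
      subst h
      obtain ⟨l, v⟩ := a
      simp [List.eraseP_cons_of_pos hq, rcxF]
      omega
    · rw [List.find?_cons_of_neg (by simpa using hq)] at h
      obtain ⟨l, v⟩ := a
      simp only [List.eraseP_cons_of_neg (by simpa using hq), rcxF]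
      have := ih p h
      omega

mutual
theorem rcx_merge_le' (w : String → ℕ) (o1 o2 : Obj) :
    rcx w (merge o1 o2) ≤ rcx w o1 + rcx w o2 := by
  cases o1 with
  | scalar s => cases o2 <;> simp [merge]
  | arr os => cases o2 <;> simp [merge]
  | obj fs =>
    cases o2 with
    | obj fs2 =>
      simp only [merge, rcx]
      exact rcxF_merge_le w fs fs2
    | scalar s => simp [merge]
    | arr os => simp [merge]
termination_by sizeOf o1
theorem rcxF_merge_le (w : String → ℕ) (fs fs2 : List (String × Obj)) :
    rcxF w (mergeFields fs fs2) ≤ rcxF w fs + rcxF w fs2 := by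
  cases fs with
  | nil => simp [mergeFields, rcxF]
  | cons a fs =>
    obtain ⟨l, v⟩ := a
    rw [mergeFields]
    cases hf : fs2.find? (fun p => p.1 == l) with
    | some p2 =>
      simp only [hf, rcxF]
      have h1 := rcx_merge_le' w v p2.2
      have h2 := rcxF_merge_le w fs (fs2.eraseP (fun p => p.1 == l))
      have h3 := rcxF_eraseP w _ fs2 p2 hf
      have hl : p2.1 = l := by
        have := List.find?_some hf
        simpa using this
      rw [hl] at h3
      omega
    | none =>
      simp only [hf, rcxF]
      have h2 := rcxF_merge_le w fs fs2
      omega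
termination_by sizeOf fs
end

/-- **Merge subadditivity.** For any two response objects `o1`, `o2` and any
(non-negative) weight configuration `w`, the resolve complexity of
`merge o1 o2` is at most `rcx o1 + rcx o2`. -/
theorem rcx_merge_le (w : String → ℕ) (o1 o2 : Obj) :
    rcx w (merge o1 o2) ≤ rcx w o1 + rcx w o2 :=
  rcx_merge_le' w o1 o2
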